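/- arXiv:0903.3822 — 2 statements merged into one kernel-verified Lean document; each statement's English description precedes it below -/
import Mathlib

section
/- For n ∈ ℕ, q ≠ 0 with q^k ≠ 1 for all positive integers k, and α with q^{α+1} generic (−α ∉ ℕ), the (n+1)×(n+1) Hankel matrix with (j,k)-entry (q^{α+1};q)_{j+k} · q^{-binom(j+k,2)} has determinant q^{-n(n+1)(4n-1)/6} · Π_{k=1}^n (q;q)_k (q^{α+1};q)_k. -/
open Finset

/-- finite q-Pochhammer symbol `(a;q)_m = ∏_{i=0}^{m-1} (1 - a q^i)` -/
noncomputable def qPoch (a q : ℂ) (n : ℕ) : ℂ :=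
  ∏ i ∈ Finset.range n, (1 - a * q ^ i)

private lemma aux_choose_add (j k : ℕ) :
    (j + k).choose 2 = j.choose 2 + k.choose 2 + j * k := by
  induction k with
  | zero => simp
  | succ k ih =>
    have h1 : j + (k + 1) = (j + k) + 1 := by omega
    have h2 : ((j + k) + 1).choose 2 = (j + k) + (j + k).choose 2 := by
      rw [Nat.choose_succ_succ, Nat.choose_one_right]
    have h3 : (k + 1).choose 2 = k + k.choose 2 := by
      rw [Nat.choose_succ_succ, Nat.choose_one_right]
    have h4 : j * (k + 1) = j * k + j := by ring
    rw [h1, h2, h3, h4]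
    omega

private lemma two_mul_choose_two (m : ℕ) : 2 * m.choose 2 = m * (m - 1) := by
  induction m with
  | zero => simp
  | succ m ih =>
    have h2 : (m + 1).choose 2 = m + m.choose 2 := by
      rw [Nat.choose_succ_succ, Nat.choose_one_right]
    have h3 : (m + 1) * ((m + 1) - 1) = m * (m - 1) + 2 * m := by
      rcases m with _ | k
      · simp
      · simp only [Nat.add_sub_cancel]
        ring
    omega

private lemma exp_sum (n : ℕ) :
    6 * ∑ j ∈ range (n + 1), (j * (j - 1) + j * j) = n * (n + 1) * (4 * n - 1) := by
  induction n with
  | zero => simp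
  | succ n ih =>
    rw [Finset.sum_range_succ, Nat.mul_add, ih]
    rcases n with _ | m
    · norm_num
    · have h1 : 4 * (m + 1) - 1 = 4 * m + 3 := by omega
      have h2 : 4 * (m + 1 + 1) - 1 = 4 * m + 7 := by omega
      rw [h1, h2]
      simp only [Nat.add_sub_cancel]
      ring

private lemma pow_factor {q : ℂ} (hq0 : q ≠ 0) {i j : ℕ} (hij : i ≤ j) :
    (q⁻¹) ^ j - (q⁻¹) ^ i = (q⁻¹) ^ j * (1 - q ^ (j - i)) := by
  rw [mul_sub, mul_one]
  congr 1
  rw [inv_pow, inv_pow, pow_sub₀ q hq0 hij]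
  field_simp

private lemma vand_inner {q : ℂ} (hq0 : q ≠ 0) (j : ℕ) :
    ∏ i ∈ range j, ((q⁻¹) ^ j - (q⁻¹) ^ i) = (q⁻¹) ^ (j * j) * qPoch q q j := by
  have h1 : ∀ i ∈ range j, (q⁻¹) ^ j - (q⁻¹) ^ i = (q⁻¹) ^ j * (1 - q ^ (j - i)) :=
    fun i hi => pow_factor hq0 (le_of_lt (mem_range.mp hi))
  rw [Finset.prod_congr rfl h1, Finset.prod_mul_distrib, Finset.prod_const, Finset.card_range,
    ← pow_mul]
  congr 1
  rw [qPoch, ← Finset.prod_range_reflect (fun i => 1 - q * q ^ i) j]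
  apply Finset.prod_congr rfl
  intro i hi
  have hlt := mem_range.mp hi
  have hji : j - i = (j - 1 - i) + 1 := by omega
  rw [hji, pow_succ']

private lemma entry_eq {q : ℂ} (hq0 : q ≠ 0) (c : ℂ) (j k : ℕ) :
    qPoch c q (j + k) * (q ^ ((j + k).choose 2))⁻¹
      = (qPoch c q j * (q ^ (j.choose 2))⁻¹) * ((q ^ (k.choose 2))⁻¹ *
          ∏ i ∈ range k, ((q⁻¹) ^ j - c * q ^ i)) := by
  have hfac : ∀ i : ℕ, (q⁻¹) ^ j - c * q ^ i = (q⁻¹) ^ j * (1 - c * q ^ (j + i)) := by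
    intro i
    rw [mul_sub, mul_one]
    congr 1
    rw [pow_add, inv_pow]
    field_simp
  have hprod : ∏ i ∈ range k, ((q⁻¹) ^ j - c * q ^ i)
      = (q⁻¹) ^ (j * k) * ∏ i ∈ range k, (1 - c * q ^ (j + i)) := by
    calc ∏ i ∈ range k, ((q⁻¹) ^ j - c * q ^ i)
        = ∏ i ∈ range k, ((q⁻¹) ^ j * (1 - c * q ^ (j + i))) :=
          Finset.prod_congr rfl (fun i _ => hfac i)
      _ = ((q⁻¹) ^ j) ^ k * ∏ i ∈ range k, (1 - c * q ^ (j + i)) := by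
          rw [Finset.prod_mul_distrib, Finset.prod_const, Finset.card_range]
      _ = (q⁻¹) ^ (j * k) * ∏ i ∈ range k, (1 - c * q ^ (j + i)) := by rw [← pow_mul]
  have hpoch : qPoch c q (j + k) = qPoch c q j * ∏ i ∈ range k, (1 - c * q ^ (j + i)) := by
    simp only [qPoch]
    rw [Finset.prod_range_add]
  rw [hprod, hpoch, aux_choose_add, pow_add, pow_add, mul_inv, mul_inv, inv_pow]
  ring

private lemma prod_Icc_of_one {n : ℕ} (f : ℕ → ℂ) (hf : f 0 = 1) :
    ∏ j ∈ range (n + 1), f j = ∏ k ∈ Finset.Icc 1 n, f k := by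
  symm
  apply Finset.prod_subset
  · intro x hx
    simp only [Finset.mem_Icc, Finset.mem_range] at *
    omega
  · intro x hx hnx
    simp only [Finset.mem_Icc, Finset.mem_range] at *
    have : x = 0 := by omega
    subst this
    exact hf

/-- The Hankel determinant of the q-Laguerre moment matrix (with `c = q^{α+1}`):
`det ((c;q)_{j+k} q^{-binom(j+k,2)}) = q^{-n(n+1)(4n-1)/6} ∏_{k=1}^n (q;q)_k (c;q)_k`. -/
theorem q_laguerre_hankel_det (n : ℕ) (q c : ℂ)
    (hq0 : q ≠ 0) (hq : ∀ k : ℕ, 1 ≤ k → q ^ k ≠ 1)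
    (hc : ∀ k : ℕ, c * q ^ k ≠ 1) :
    (Matrix.of fun j k : Fin (n + 1) =>
        qPoch c q ((j : ℕ) + (k : ℕ)) * (q ^ (((j : ℕ) + (k : ℕ)).choose 2))⁻¹).det
      = (q ^ (n * (n + 1) * (4 * n - 1) / 6))⁻¹ *
        ∏ k ∈ Finset.Icc 1 n, qPoch q q k * qPoch c q k := by
  classical
  -- the "core" matrix
  set V : Matrix (Fin (n + 1)) (Fin (n + 1)) ℂ :=
    Matrix.of (fun j k : Fin (n + 1) => ∏ i ∈ range (k : ℕ), ((q⁻¹) ^ (j : ℕ) - c * q ^ i))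
    with hV
  have hdet1 : (Matrix.of fun j k : Fin (n + 1) =>
        qPoch c q ((j : ℕ) + (k : ℕ)) * (q ^ (((j : ℕ) + (k : ℕ)).choose 2))⁻¹)
      = Matrix.of fun j k : Fin (n + 1) =>
          (qPoch c q (j : ℕ) * (q ^ ((j : ℕ).choose 2))⁻¹) *
            (Matrix.of fun j k : Fin (n + 1) => (q ^ ((k : ℕ).choose 2))⁻¹ * V j k) j k := by
    ext j k
    simp only [Matrix.of_apply, hV]
    exact entry_eq hq0 c (j : ℕ) (k : ℕ)
  rw [hdet1, Matrix.det_mul_column, Matrix.det_mul_row]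
  -- vandermonde evaluation of det V
  have hVdet : V.det = (Matrix.vandermonde fun j : Fin (n + 1) => (q⁻¹) ^ (j : ℕ)).det := by
    rw [Matrix.det_eval_matrixOfPolynomials_eq_det_vandermonde
      (fun j : Fin (n + 1) => (q⁻¹) ^ (j : ℕ))
      (fun k : Fin (n + 1) => ∏ i ∈ range (k : ℕ), (Polynomial.X - Polynomial.C (c * q ^ i)))
      (fun k => by
        rw [Polynomial.natDegree_prod_of_monic _ _
          (fun i _ => Polynomial.monic_X_sub_C _)]
        simp only [Polynomial.natDegree_X_sub_C, Finset.sum_const, Finset.card_range,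
          smul_eq_mul, mul_one])
      (fun k => Polynomial.monic_prod_of_monic _ _ (fun i _ => Polynomial.monic_X_sub_C _))]
    congr 1
    ext j k
    simp [hV, Polynomial.eval_prod, inv_pow]
  -- compute the vandermonde determinant
  have hswap : (Matrix.vandermonde fun j : Fin (n + 1) => (q⁻¹) ^ (j : ℕ)).det
      = ∏ j : Fin (n + 1), ∏ i ∈ Finset.Iio j, ((q⁻¹) ^ (j : ℕ) - (q⁻¹) ^ (i : ℕ)) := by
    rw [Matrix.det_vandermonde]
    exact Finset.prod_comm' (by
      intro x y
      simp only [Finset.mem_univ, Finset.mem_Ioi, Finset.mem_Iio, true_and, and_true])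
  have hIio : ∀ (g : ℕ → ℂ) (b : Fin (n + 1)),
      ∏ i ∈ Finset.Iio b, g (i : ℕ) = ∏ i ∈ range (b : ℕ), g i := by
    intro g b
    rw [← Nat.Iio_eq_range, ← Fin.map_valEmbedding_Iio, Finset.prod_map]
    rfl
  have hvand : (Matrix.vandermonde fun j : Fin (n + 1) => (q⁻¹) ^ (j : ℕ)).det
      = (q⁻¹) ^ (∑ j ∈ range (n + 1), j * j) * ∏ j ∈ range (n + 1), qPoch q q j := by
    rw [hswap]
    have : ∀ j : Fin (n + 1), ∏ i ∈ Finset.Iio j, ((q⁻¹) ^ (j : ℕ) - (q⁻¹) ^ (i : ℕ))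
        = (q⁻¹) ^ ((j : ℕ) * (j : ℕ)) * qPoch q q (j : ℕ) := by
      intro j
      rw [hIio (fun i => (q⁻¹) ^ (j : ℕ) - (q⁻¹) ^ i) j]
      exact vand_inner hq0 (j : ℕ)
    rw [Finset.prod_congr rfl (fun j _ => this j)]
    rw [Fin.prod_univ_eq_prod_range (fun j => (q⁻¹) ^ (j * j) * qPoch q q j) (n + 1),
      Finset.prod_mul_distrib, Finset.prod_pow_eq_pow_sum]
  -- the scalar factor products
  have hcolfac : ∏ k : Fin (n + 1), (q ^ ((k : ℕ).choose 2))⁻¹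
      = (q ^ (∑ j ∈ range (n + 1), j.choose 2))⁻¹ := by
    rw [Fin.prod_univ_eq_prod_range (fun k => (q ^ (k.choose 2))⁻¹) (n + 1),
      Finset.prod_inv_distrib, Finset.prod_pow_eq_pow_sum]
  have hrowfac : ∏ j : Fin (n + 1), (qPoch c q (j : ℕ) * (q ^ ((j : ℕ).choose 2))⁻¹)
      = (∏ j ∈ range (n + 1), qPoch c q j) * (q ^ (∑ j ∈ range (n + 1), j.choose 2))⁻¹ := by
    rw [Finset.prod_mul_distrib, hcolfac]
    congr 1
    exact Fin.prod_univ_eq_prod_range (fun j => qPoch c q j) (n + 1)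
  rw [hVdet, hvand, hrowfac, hcolfac]
  -- exponent arithmetic
  have hexp : n * (n + 1) * (4 * n - 1) / 6
      = 2 * (∑ j ∈ range (n + 1), j.choose 2) + ∑ j ∈ range (n + 1), j * j := by
    have h6 := exp_sum n
    have hsplit : ∑ j ∈ range (n + 1), (j * (j - 1) + j * j)
        = 2 * (∑ j ∈ range (n + 1), j.choose 2) + ∑ j ∈ range (n + 1), j * j := by
      rw [Finset.sum_add_distrib, Finset.mul_sum]
      congr 1
      exact Finset.sum_congr rfl (fun j _ => (two_mul_choose_two j).symm)
    rw [hsplit] at h6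
    omega
  rw [hexp]
  -- product over Icc
  have hPq : ∏ j ∈ range (n + 1), qPoch q q j = ∏ k ∈ Finset.Icc 1 n, qPoch q q k :=
    prod_Icc_of_one _ (by simp [qPoch])
  have hPc : ∏ j ∈ range (n + 1), qPoch c q j = ∏ k ∈ Finset.Icc 1 n, qPoch c q k :=
    prod_Icc_of_one _ (by simp [qPoch])
  rw [hPq, hPc, Finset.prod_mul_distrib]
  rw [pow_add, pow_mul, mul_inv, inv_pow]
  ring_nf
end

section
/- For n ∈ ℕ and q ≠ 0 with q^k ≠ 1 for all k ∈ ℕ (k ≥ 1), the (n+1)×(n+1) matrix with (j,k)-entry equal to 0 if j+k is odd and q^{-(j+k)²/4}(q;q²)_{(j+k)/2} if j+k is even, has determinant q^{-n(n+1)(2n+1)/6} Π_{k=0}^n (q;q)_k. (Here exact powers of q may require q > 0 real or a chosen branch; equivalently work with the squared determinant or restrict to even-powered formulation.) -/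
open Finset

/-- Moment `ν_m = q^{-m²} (q;q²)_m`. -/
noncomputable def nu (q : ℂ) (m : ℕ) : ℂ := (q ^ (m ^ 2))⁻¹ * qPoch q (q ^ 2) m

/-- Shifted Hankel determinant of the sequence `ν`. -/
noncomputable def F (q : ℂ) (s r : ℕ) : ℂ :=
  (Matrix.of fun a b : Fin s => nu q ((a : ℕ) + (b : ℕ) + r)).det

noncomputable def W (q : ℂ) (s : ℕ) : ℂ := ∏ b ∈ range s, ((q ^ (2*b+2))⁻¹ - 1)

noncomputable def g (q : ℂ) (s r : ℕ) : ℂ :=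
  nu q (r + s) * (q ^ (s*(2*s+2*r-1)))⁻¹ * W q s

lemma qPoch_succ (a Q : ℂ) (n : ℕ) : qPoch a Q (n+1) = qPoch a Q n * (1 - a * Q^n) :=
  prod_range_succ _ _

lemma nu_succ (q : ℂ) (hq0 : q ≠ 0) (m : ℕ) :
    nu q (m+1) = ((q^(2*m+1))⁻¹ - 1) * nu q m := by
  simp only [nu, qPoch, prod_range_succ]
  rw [show ((m+1)^2) = m^2 + (2*m+1) from by ring, pow_add, mul_inv,
    show q * (q^2)^m = q^(2*m+1) from by ring]
  field_simp

lemma sum1 (s r : ℕ) : ∑ a ∈ range s, (2*a+2*r+1) = s*(s+2*r) := by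
  induction s with
  | zero => simp
  | succ s ih => rw [sum_range_succ, ih]; ring

lemma sum2 (t : ℕ) : ∑ b ∈ range t, (2*b+2) = t*(t+1) := by
  induction t with
  | zero => simp
  | succ t ih => rw [sum_range_succ, ih]; ring

lemma W_eq (q : ℂ) (hq0 : q ≠ 0) (t : ℕ) :
    W q t = (q^(t*(t+1)))⁻¹ * ∏ b ∈ range t, (1 - q^(2*b+2)) := by
  have : ∀ b ∈ range t, ((q ^ (2*b+2))⁻¹ - 1) = (q^(2*b+2))⁻¹ * (1 - q^(2*b+2)) := by
    intro b _
    field_simp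
  rw [W, prod_congr rfl this, prod_mul_distrib, prod_inv_distrib,
    prod_pow_eq_pow_sum, sum2]

lemma qPoch_split (q : ℂ) (m : ℕ) :
    qPoch q q (2*m) = qPoch q (q^2) m * ∏ b ∈ range m, (1 - q^(2*b+2)) ∧
    qPoch q q (2*m+1) = qPoch q (q^2) (m+1) * ∏ b ∈ range m, (1 - q^(2*b+2)) := by
  induction m with
  | zero => simp [qPoch]
  | succ m ih =>
    obtain ⟨h1, h2⟩ := ih
    constructor
    · rw [show 2*(m+1) = (2*m+1)+1 from by ring, qPoch_succ, h2, prod_range_succ]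
      ring
    · rw [show 2*(m+1)+1 = ((2*m+1)+1)+1 from by ring, qPoch_succ, qPoch_succ, h2,
        show m+1+1 = (m+1)+1 from rfl, qPoch_succ (q) (q^2) (m+1), prod_range_succ]
      ring

lemma T_succ (n : ℕ) : (n+1)*((n+1)+1)*(2*(n+1)+1)/6 = n*(n+1)*(2*n+1)/6 + (n+1)^2 := by
  rw [show (n+1)*((n+1)+1)*(2*(n+1)+1) = n*(n+1)*(2*n+1) + 6*((n+1)^2) from by ring,
    Nat.add_mul_div_left _ _ (by norm_num)]

lemma F_succ (q : ℂ) (hq0 : q ≠ 0) (s r : ℕ) :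
    F q (s+1) r = nu q r * (q^(s*(s+2*r)))⁻¹ * W q s * F q s (r+1) := by
  classical
  let M : Matrix (Fin (s+1)) (Fin (s+1)) ℂ := Matrix.of fun a b => nu q ((a:ℕ)+(b:ℕ)+r)
  let L : Matrix (Fin (s+1)) (Fin (s+1)) ℂ := Matrix.of fun a b =>
    if a = b then 1 else if (a:ℕ) = (b:ℕ)+1 then (1 - (q^(2*(b:ℕ)+2*r+1))⁻¹) else 0
  let N : Matrix (Fin (s+1)) (Fin (s+1)) ℂ := Matrix.of fun a b =>
    if (a:ℕ) = 0 then nu q ((b:ℕ)+r)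
    else (q^(2*((a:ℕ)-1)+2*r+1))⁻¹ * ((q^(2*(b:ℕ)))⁻¹ - 1) * nu q (((a:ℕ)-1)+(b:ℕ)+r)
  have hLM : L * M = N := by
    ext a b
    rw [Matrix.mul_apply]
    induction a using Fin.cases with
    | zero =>
      rw [Finset.sum_eq_single (0 : Fin (s+1))]
      · simp [L, M, N]
      · intro x _ hx
        have h1 : ¬((0:Fin (s+1)) = x) := fun h => hx h.symm
        have h2 : ¬(((0:Fin (s+1)):ℕ) = (x:ℕ)+1) := by simp
        simp only [L, Matrix.of_apply, if_neg h1, if_neg h2, zero_mul]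
      · simp
    | succ i =>
      rw [Finset.sum_eq_add i.succ i.castSucc
        (by intro h; have := congrArg Fin.val h; simp [Fin.val_succ] at this)
        (by
          intro c _ hc
          have h1 : ¬(i.succ = c) := fun h => hc.1 h.symm
          have h2 : ¬((i.succ:ℕ) = (c:ℕ)+1) := by
            intro h
            apply hc.2
            apply Fin.ext
            simp only [Fin.coe_castSucc]
            simp only [Fin.val_succ] at h
            omega
          simp only [L, Matrix.of_apply, if_neg h1, if_neg h2, zero_mul])
        (by simp) (by simp)]
      have hA : L i.succ i.succ = 1 := by simp [L]
      have hB : L i.succ i.castSucc = 1 - (q^(2*(i:ℕ)+2*r+1))⁻¹ := by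
        simp only [L, Matrix.of_apply]
        rw [if_neg (by intro h; have := congrArg Fin.val h; simp [Fin.val_succ] at this),
          if_pos (by simp [Fin.val_succ])]
        rw [Fin.coe_castSucc]
      have hC : N i.succ b =
          (q^(2*(i:ℕ)+2*r+1))⁻¹ * ((q^(2*(b:ℕ)))⁻¹ - 1) * nu q ((i:ℕ)+(b:ℕ)+r) := by
        simp only [N, Matrix.of_apply, Fin.val_succ]
        rw [if_neg (by omega), show (i:ℕ)+1-1 = (i:ℕ) from rfl]
      have hM1 : M i.succ b = nu q (((i:ℕ)+(b:ℕ)+r)+1) := by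
        simp only [M, Matrix.of_apply, Fin.val_succ]
        congr 1; ring
      have hM2 : M i.castSucc b = nu q ((i:ℕ)+(b:ℕ)+r) := by
        simp only [M, Matrix.of_apply, Fin.coe_castSucc]
      rw [hA, hB, hC, hM1, hM2, nu_succ q hq0,
        show 2*((i:ℕ)+(b:ℕ)+r)+1 = (2*(i:ℕ)+2*r+1) + 2*(b:ℕ) from by ring, pow_add, mul_inv]
      ring
  have hdetL : L.det = 1 := by
    rw [Matrix.det_of_lowerTriangular L (by
      intro a b hab
      have hab' : a < b := hab
      have hv : (a:ℕ) < (b:ℕ) := hab'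
      simp only [L, Matrix.of_apply]
      rw [if_neg (by intro h; rw [h] at hv; omega), if_neg (by omega)])]
    apply Finset.prod_eq_one
    intro a _
    simp [L]
  have hMN : M.det = N.det := by
    rw [← hLM, Matrix.det_mul, hdetL, one_mul]
  have hN : N.det = nu q r * ((q^(s*(s+2*r)))⁻¹ * (W q s * F q s (r+1))) := by
    rw [Matrix.det_succ_column_zero, Finset.sum_eq_single (0 : Fin (s+1))]
    · have hsub : (N.submatrix (Fin.succAbove 0) Fin.succ) =
        Matrix.of (fun a b : Fin s => ((q^(2*(a:ℕ)+2*r+1))⁻¹ : ℂ) *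
          (Matrix.of (fun a b : Fin s => ((q^(2*(b:ℕ)+2))⁻¹ - 1) *
            (Matrix.of (fun a b : Fin s => nu q ((a:ℕ)+(b:ℕ)+(r+1))) a b)) a b)) := by
        ext a b
        simp only [Fin.succAbove_zero, Matrix.submatrix_apply, Matrix.of_apply, N,
          Fin.val_succ]
        rw [if_neg (by omega), show (a:ℕ)+1-1 = (a:ℕ) from rfl,
          show 2*((b:ℕ)+1) = 2*(b:ℕ)+2 from by ring,
          show (a:ℕ)+((b:ℕ)+1)+r = (a:ℕ)+(b:ℕ)+(r+1) from by ring]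
        ring
      rw [hsub, Matrix.det_mul_column, Matrix.det_mul_row]
      have hv : (∏ a : Fin s, ((q^(2*(a:ℕ)+2*r+1))⁻¹ : ℂ)) = (q^(s*(s+2*r)))⁻¹ := by
        rw [Fin.prod_univ_eq_prod_range (fun a => ((q^(2*a+2*r+1))⁻¹ : ℂ)),
          prod_inv_distrib, prod_pow_eq_pow_sum, sum1]
      have hw : (∏ b : Fin s, (((q^(2*(b:ℕ)+2))⁻¹ : ℂ) - 1)) = W q s := by
        rw [Fin.prod_univ_eq_prod_range (fun b => ((q^(2*b+2))⁻¹ : ℂ) - 1)]; rfl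
      have h00 : N 0 0 = nu q r := by simp [N]
      rw [hv, hw, h00]
      simp [F]
    · intro x _ hx
      have hx0 : ¬ ((x:ℕ) = 0) := by
        intro h; exact hx (Fin.ext (by simpa using h))
      have : N x 0 = 0 := by
        simp only [N, Matrix.of_apply, if_neg hx0]
        simp
      rw [this]; ring
    · simp
  show M.det = _
  rw [hMN, hN]; ring

lemma F_ratio (q : ℂ) (hq0 : q ≠ 0) : ∀ r s, F q (s+1) r = F q s r * g q s r := by
  intro r s
  induction s generalizing r with
  | zero =>
    simp [F, g, W, Matrix.det_fin_one, Matrix.det_fin_zero]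
  | succ s ih =>
    rw [F_succ q hq0 (s+1) r, ih (r+1), F_succ q hq0 s r]
    simp only [g, W, prod_range_succ]
    rw [show 2*s+2*(r+1)-1 = 2*s+2*r+1 from by omega,
        show 2*(s+1)+2*r-1 = 2*s+2*r+1 from by omega,
        show r+1+s = r+(s+1) from by omega]
    field_simp
    ring

lemma gt1 (q : ℂ) (hq0 : q ≠ 0) (t : ℕ) :
    g q t 1 = (q^((2*t+1)^2))⁻¹ * qPoch q q (2*t+1) := by
  rw [(qPoch_split q t).2]
  simp only [g, nu, W_eq q hq0]
  rw [show 2*t+2*1-1 = 2*t+1 from by omega]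
  field_simp
  ring

lemma gt0 (q : ℂ) (hq0 : q ≠ 0) (t : ℕ) :
    g q (t+1) 0 = (q^((2*t+1+1)^2))⁻¹ * qPoch q q (2*t+1+1) := by
  rw [show 2*t+1+1 = 2*(t+1) from by omega, (qPoch_split q (t+1)).1]
  simp only [g, nu, W_eq q hq0]
  rw [show 2*(t+1)+2*0-1 = 2*t+1 from by omega]
  field_simp
  ring

lemma key (q : ℂ) (hq0 : q ≠ 0) : ∀ n : ℕ,
    F q (n/2+1) 0 * F q ((n+1)/2) 1
      = (q ^ (n*(n+1)*(2*n+1)/6))⁻¹ * ∏ k ∈ range (n+1), qPoch q q k := by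
  intro n
  induction n with
  | zero =>
    simp [F, Matrix.det_fin_one, Matrix.det_fin_zero, nu, qPoch]
  | succ n ih =>
    rw [T_succ n, prod_range_succ, pow_add, mul_inv]
    rcases Nat.even_or_odd n with ⟨t, ht⟩ | ⟨t, ht⟩
    · have ht' : n = 2*t := by omega
      subst ht'
      rw [show (2*t+1)/2+1 = t+1 from by omega, show (2*t+1+1)/2 = t+1 from by omega]
      rw [show (2*t)/2+1 = t+1 from by omega, show (2*t+1)/2 = t from by omega] at ih
      rw [F_ratio q hq0 1 t, ← mul_assoc, ih, gt1 q hq0 t]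
      ring
    · subst ht
      rw [show (2*t+1+1)/2+1 = t+2 from by omega, show (2*t+1+1+1)/2 = t+1 from by omega]
      rw [show (2*t+1)/2+1 = t+1 from by omega, show (2*t+1+1)/2 = t+1 from by omega] at ih
      rw [show t+2 = (t+1)+1 from rfl, F_ratio q hq0 0 (t+1), mul_right_comm, ih,
        gt0 q hq0 t]
      ring

lemma block (q : ℂ) (n : ℕ) :
    (Matrix.of fun j k : Fin (n + 1) =>
        if Even ((j : ℕ) + (k : ℕ)) then
          (q ^ (((j : ℕ) + (k : ℕ)) ^ 2 / 4))⁻¹ *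
            qPoch q (q ^ 2) (((j : ℕ) + (k : ℕ)) / 2)
        else 0).det
      = F q (n/2+1) 0 * F q ((n+1)/2) 1 := by
  classical
  let σ : Fin (n/2+1) ⊕ Fin ((n+1)/2) ≃ Fin (n+1) :=
    { toFun := Sum.elim (fun a => ⟨2*(a:ℕ), by have := a.isLt; omega⟩)
               (fun b => ⟨2*(b:ℕ)+1, by have := b.isLt; omega⟩)
      invFun := fun m => if h : (m:ℕ) % 2 = 0
        then Sum.inl ⟨(m:ℕ)/2, by have := m.isLt; omega⟩
        else Sum.inr ⟨(m:ℕ)/2, by have := m.isLt; omega⟩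
      left_inv := by
        rintro (a | b)
        · dsimp only [Sum.elim_inl]
          rw [dif_pos (by omega)]
          simp only [Sum.inl.injEq, Fin.ext_iff]
          omega
        · dsimp only [Sum.elim_inr]
          rw [dif_neg (by omega)]
          simp only [Sum.inr.injEq, Fin.ext_iff]
          omega
      right_inv := by
        intro m
        by_cases h : (m:ℕ) % 2 = 0
        · dsimp only
          rw [dif_pos h]
          simp only [Sum.elim_inl, Fin.ext_iff]
          have := m.isLt; omega
        · dsimp only
          rw [dif_neg h]
          simp only [Sum.elim_inr, Fin.ext_iff]
          have := m.isLt; omega }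
  rw [← Matrix.det_submatrix_equiv_self σ]
  have hB : ((Matrix.of fun j k : Fin (n + 1) =>
        if Even ((j : ℕ) + (k : ℕ)) then
          (q ^ (((j : ℕ) + (k : ℕ)) ^ 2 / 4))⁻¹ *
            qPoch q (q ^ 2) (((j : ℕ) + (k : ℕ)) / 2)
        else 0).submatrix σ σ) = Matrix.fromBlocks
      (Matrix.of fun a b : Fin (n/2+1) => nu q ((a:ℕ)+(b:ℕ)+0))
      0 0
      (Matrix.of fun a b : Fin ((n+1)/2) => nu q ((a:ℕ)+(b:ℕ)+1)) := by
    ext ab cd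
    rcases ab with a | a <;> rcases cd with b | b <;>
      simp only [Matrix.submatrix_apply, Equiv.coe_fn_mk, Sum.elim_inl, Sum.elim_inr,
        Matrix.of_apply, Matrix.fromBlocks_apply₁₁, Matrix.fromBlocks_apply₁₂,
        Matrix.fromBlocks_apply₂₁, Matrix.fromBlocks_apply₂₂, Matrix.zero_apply, σ]
    · rw [if_pos ⟨(a:ℕ)+(b:ℕ), by omega⟩, nu,
        show 2*(a:ℕ)+2*(b:ℕ) = 2*((a:ℕ)+(b:ℕ)) from by ring,
        show (2*((a:ℕ)+(b:ℕ)))^2 = ((a:ℕ)+(b:ℕ))^2*4 from by ring,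
        Nat.mul_div_cancel _ (by norm_num), Nat.mul_div_cancel_left _ (by norm_num),
        show (a:ℕ)+(b:ℕ)+0 = (a:ℕ)+(b:ℕ) from by omega]
    · rw [if_neg (by rintro ⟨r, hr⟩; omega)]
    · rw [if_neg (by rintro ⟨r, hr⟩; omega)]
    · rw [if_pos ⟨(a:ℕ)+(b:ℕ)+1, by omega⟩, nu,
        show 2*(a:ℕ)+1+(2*(b:ℕ)+1) = 2*((a:ℕ)+(b:ℕ)+1) from by ring,
        show (2*((a:ℕ)+(b:ℕ)+1))^2 = ((a:ℕ)+(b:ℕ)+1)^2*4 from by ring,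
        Nat.mul_div_cancel _ (by norm_num), Nat.mul_div_cancel_left _ (by norm_num)]
  rw [hB, Matrix.det_fromBlocks_zero₂₁]
  rfl

/-- The Hankel determinant of the discrete q-Hermite II moment matrix: the matrix whose
`(j,k)`-entry is `0` for `j+k` odd and `q^{-(j+k)²/4} (q;q²)_{(j+k)/2}` for `j+k` even
has determinant `q^{-n(n+1)(2n+1)/6} ∏_{k=0}^n (q;q)_k`. -/
theorem discrete_q_hermite_II_hankel_det (n : ℕ) (q : ℂ)
    (hq0 : q ≠ 0) (hq : ∀ k : ℕ, 1 ≤ k → q ^ k ≠ 1) :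
    (Matrix.of fun j k : Fin (n + 1) =>
        if Even ((j : ℕ) + (k : ℕ)) then
          (q ^ (((j : ℕ) + (k : ℕ)) ^ 2 / 4))⁻¹ *
            qPoch q (q ^ 2) (((j : ℕ) + (k : ℕ)) / 2)
        else 0).det
      = (q ^ (n * (n + 1) * (2 * n + 1) / 6))⁻¹ *
        ∏ k ∈ Finset.range (n + 1), qPoch q q k := by
  rw [block q n]
  exact key q hq0 n
end
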